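/- Let C be a linear [n,k,d] rank-metric code over F_{q^m}, ℓ ≥ 1, and suppose E ∈ F_{q^m}^{ℓ×n} satisfies rank_{F_q}(E) = rank_{F_{q^m}}(E) = t ≤ d−2. Then the codeword C₀ of the homogeneous ℓ-interleaved code of C is uniquely determined by R = C₀ + E; i.e., if C₁, C₂ are interleaved codewords and E₁, E₂ are errors satisfying these conditions with C₁ + E₁ = C₂ + E₂, then C₁ = C₂ and E₁ = E₂. -/

import Mathlib

open Matrix

noncomputable def extV {K L : Type} [Field K] [Field L] [Algebra K L]
    {m n : ℕ} (γ : Module.Basis (Fin m) K L) (v : Fin n → L) : Matrix (Fin m) (Fin n) K :=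
  Matrix.of fun i j => γ.repr (v j) i

noncomputable def extM {K L : Type} [Field K] [Field L] [Algebra K L]
    {m n : ℕ} {ι : Type} (γ : Module.Basis (Fin m) K L) (E : Matrix ι (Fin n) L) :
    Matrix (ι × Fin m) (Fin n) K :=
  Matrix.of fun p j => γ.repr (E p.1 j) p.2

section Aux

variable {K L : Type} [Field K] [Field L] [Algebra K L] {m n : ℕ}

/-- Coordinatewise inclusion of `K^n` into `L^n`. -/
def ιmap (w : Fin n → K) : Fin n → L := fun j => algebraMap K L (w j)

lemma finrank_span_range_le' {F M : Type} [Field F] [AddCommGroup M] [Module F M]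
    {s : ℕ} (f : Fin s → M) :
    Module.finrank F (Submodule.span F (Set.range f)) ≤ s := by
  classical
  have h := finrank_span_le_card (R := F) (Set.range f)
  rw [Set.toFinset_range] at h
  exact h.trans ((Finset.card_image_le).trans (by simp))

lemma rank_extV_eq (γ : Module.Basis (Fin m) K L) (v : Fin n → L) :
    (extV γ v).rank = Module.finrank K (Submodule.span K (Set.range v)) := by
  rw [← Matrix.rank_transpose, Matrix.rank_eq_finrank_span_row]
  have h : Set.range (extV γ v)ᵀ = ⇑γ.equivFun '' Set.range v := by
    rw [← Set.range_comp]; rfl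
  have h2 : Submodule.span K (⇑γ.equivFun '' Set.range v)
      = (Submodule.span K (Set.range v)).map (γ.equivFun : L →ₗ[K] (Fin m → K)) := by
    rw [Submodule.map_span]; rfl
  rw [Matrix.row, h, h2, LinearEquiv.finrank_map_eq]

lemma ιmap_mem_span {S : Set (Fin n → K)} {x : Fin n → K}
    (hx : x ∈ Submodule.span K S) :
    ιmap (K := K) (L := L) x ∈ Submodule.span L (ιmap (K := K) (L := L) '' S) := by
  induction hx using Submodule.span_induction with
  | mem y hy => exact Submodule.subset_span ⟨y, hy, rfl⟩
  | zero =>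
      have : ιmap (K := K) (L := L) (0 : Fin n → K) = 0 := by
        funext j; simp [ιmap]
      rw [this]; exact Submodule.zero_mem _
  | add y z _ _ hy hz =>
      have : ιmap (K := K) (L := L) (y + z) = ιmap y + ιmap z := by
        funext j; simp [ιmap]
      rw [this]; exact Submodule.add_mem _ hy hz
  | smul c y _ hy =>
      have : ιmap (K := K) (L := L) (c • y) = algebraMap K L c • ιmap y := by
        funext j; simp [ιmap, Algebra.smul_def]
      rw [this]; exact Submodule.smul_mem _ _ hy

lemma ιmap_linearIndependent (γ : Module.Basis (Fin m) K L) {s : ℕ} {w : Fin s → Fin n → K}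
    (hw : LinearIndependent K w) :
    LinearIndependent L (fun i => ιmap (K := K) (L := L) (w i)) := by
  rw [Fintype.linearIndependent_iff] at hw ⊢
  intro g hg i
  have hj : ∀ j : Fin n, ∑ i, (w i j) • g i = (0 : L) := by
    intro j
    have := congrFun hg j
    simp only [Finset.sum_apply, Pi.smul_apply, Pi.zero_apply, smul_eq_mul] at this
    calc ∑ i, (w i j) • g i = ∑ i, g i * ιmap (K := K) (L := L) (w i) j := by
          refine Finset.sum_congr rfl fun i _ => ?_
          rw [Algebra.smul_def, mul_comm]; rfl
      _ = 0 := this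
  have hp : ∀ p : Fin m, ∀ i, γ.repr (g i) p = 0 := by
    intro p
    have key : ∀ j : Fin n, ∑ i, (γ.repr (g i) p) • w i j = (0 : K) := by
      intro j
      have := congrArg (fun x => γ.repr x p) (hj j)
      simpa [map_sum, Finsupp.smul_apply, smul_eq_mul, mul_comm] using this
    exact hw (fun i => γ.repr (g i) p) (by funext j; simpa using key j)
  have : γ.repr (g i) = 0 := Finsupp.ext fun p => hp p i
  have := congrArg γ.repr.symm this
  simpa using this

lemma row_mem_span_extM (γ : Module.Basis (Fin m) K L) {ι' : Type} (E : Matrix ι' (Fin n) L)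
    (i : ι') :
    E i ∈ Submodule.span L (ιmap (K := K) (L := L) '' Set.range (extM γ E)) := by
  have hrow : E i = ∑ p : Fin m, γ p • ιmap (K := K) (L := L) (extM γ E (i, p)) := by
    funext j
    have := γ.sum_repr (E i j)
    simp only [Finset.sum_apply, Pi.smul_apply, smul_eq_mul]
    calc E i j = ∑ p, γ.repr (E i j) p • γ p := (γ.sum_repr (E i j)).symm
      _ = ∑ p, γ p * ιmap (K := K) (L := L) (extM γ E (i, p)) j := by
          refine Finset.sum_congr rfl fun p _ => ?_
          rw [Algebra.smul_def, mul_comm]; rfl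
  rw [hrow]
  exact Submodule.sum_mem _ fun p _ =>
    Submodule.smul_mem _ _ (Submodule.subset_span ⟨_, Set.mem_range_self _, rfl⟩)

lemma finrank_span_image_ιmap_le (γ : Module.Basis (Fin m) K L) (S : Set (Fin n → K)) :
    Module.finrank L (Submodule.span L (ιmap (K := K) (L := L) '' S)) ≤
      Module.finrank K (Submodule.span K S) := by
  set W : Submodule K (Fin n → K) := Submodule.span K S with hW
  let bw := Module.finBasis K W
  set b : Fin (Module.finrank K W) → (Fin n → K) := fun i => (bw i : Fin n → K) with hb
  have hbli : LinearIndependent K b :=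
    bw.linearIndependent.map' W.subtype (Submodule.ker_subtype _)
  have hbspan : Submodule.span K (Set.range b) = W := by
    have h1 : Set.range b = W.subtype '' Set.range bw := by
      rw [← Set.range_comp]; rfl
    rw [h1, ← Submodule.map_span, Module.Basis.span_eq, Submodule.map_top, Submodule.range_subtype]
  have hle : Submodule.span L (ιmap (K := K) (L := L) '' S) ≤
      Submodule.span L (Set.range fun i => ιmap (K := K) (L := L) (b i)) := by
    rw [Submodule.span_le]
    rintro x ⟨y, hy, rfl⟩
    have hyW : y ∈ Submodule.span K (Set.range b) := by
      rw [hbspan]; exact Submodule.subset_span hy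
    have := ιmap_mem_span (L := L) hyW
    rwa [show ιmap (K := K) (L := L) '' Set.range b = Set.range fun i => ιmap (K := K) (L := L) (b i) by
      rw [← Set.range_comp]; rfl] at this
  refine (Submodule.finrank_mono hle).trans ?_
  rw [finrank_span_eq_card (ιmap_linearIndependent γ hbli)]
  simp

lemma rowspace_eq_span_extM (γ : Module.Basis (Fin m) K L) {ι' : Type} [Fintype ι']
    (E : Matrix ι' (Fin n) L) (hfull : E.rank = (extM γ E).rank) :
    Submodule.span L (Set.range E) =
      Submodule.span L (ιmap (K := K) (L := L) '' Set.range (extM γ E)) := by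
  apply Submodule.eq_of_le_of_finrank_le
  · rw [Submodule.span_le]
    rintro x ⟨i, rfl⟩
    exact row_mem_span_extM γ E i
  · calc Module.finrank L (Submodule.span L (ιmap (K := K) (L := L) '' Set.range (extM γ E)))
        ≤ Module.finrank K (Submodule.span K (Set.range (extM γ E))) :=
          finrank_span_image_ιmap_le γ _
      _ = (extM γ E).rank := (Matrix.rank_eq_finrank_span_row _).symm
      _ = E.rank := hfull.symm
      _ = Module.finrank L (Submodule.span L (Set.range E)) :=
          Matrix.rank_eq_finrank_span_row _

end Aux

/-- unique decoding of high-order interleaved codes: let `C` be a linear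
`[n,k,d]` rank-metric code over `F_{q^m}` with minimum rank distance `d`. If interleaved
codewords `C₁, C₂` (all rows in `C`) and errors `E₁, E₂`, each satisfying
`rank_{F_q}(Eᵢ) = rank_{F_{q^m}}(Eᵢ) ≤ d - 2`, give the same received word
`C₁ + E₁ = C₂ + E₂`, then `C₁ = C₂` and `E₁ = E₂`. -/
theorem interleaved_unique_decoding {q m n k d ℓ : ℕ} (K L : Type) [Field K] [Fintype K]
    [Field L] [Fintype L] [Algebra K L] (hK : Fintype.card K = q) (hL : Fintype.card L = q ^ m)
    (γ : Module.Basis (Fin m) K L)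
    (C : Submodule L (Fin n → L)) (hk : Module.finrank L C = k)
    (hd : ∀ v ∈ C, v ≠ 0 → d ≤ (extV γ v).rank)
    (hd' : ∃ v ∈ C, v ≠ 0 ∧ (extV γ v).rank = d)
    (C₁ C₂ E₁ E₂ : Matrix (Fin ℓ) (Fin n) L)
    (hC₁ : ∀ i, C₁ i ∈ C) (hC₂ : ∀ i, C₂ i ∈ C)
    (hE₁full : E₁.rank = (extM γ E₁).rank) (hE₁t : (extM γ E₁).rank ≤ d - 2)
    (hE₂full : E₂.rank = (extM γ E₂).rank) (hE₂t : (extM γ E₂).rank ≤ d - 2)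
    (hR : C₁ + E₁ = C₂ + E₂) :
    C₁ = C₂ ∧ E₁ = E₂ := by
  classical
  haveI : Module.Finite K L := Module.Finite.of_basis γ
  have main : C₁ = C₂ := by
    by_contra hne
    set Δ : Matrix (Fin ℓ) (Fin n) L := C₁ - C₂ with hΔdef
    have hΔne : Δ ≠ 0 := sub_ne_zero.mpr hne
    have hΔE : Δ = E₂ - E₁ := by
      rw [hΔdef, sub_eq_sub_iff_add_eq_add]
      exact hR.trans (add_comm _ _)
    have hΔrow : ∀ i, Δ i = C₁ i - C₂ i := fun i => rfl
    have hΔrowE : ∀ i, Δ i = E₂ i - E₁ i := fun i => by rw [hΔE]; rfl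
    set S₁ : Set (Fin n → K) := Set.range (extM γ E₁) with hS₁
    set S₂ : Set (Fin n → K) := Set.range (extM γ E₂) with hS₂
    set t₁ : ℕ := (extM γ E₁).rank with ht₁
    set t₂ : ℕ := (extM γ E₂).rank with ht₂
    set W : Submodule K (Fin n → K) := Submodule.span K (S₁ ∪ S₂) with hW
    set s : ℕ := Module.finrank K W with hs
    -- t₁, t₂ as finranks of row spans over K
    have ht₁' : t₁ = Module.finrank K (Submodule.span K S₁) :=
      Matrix.rank_eq_finrank_span_row _
    have ht₂' : t₂ = Module.finrank K (Submodule.span K S₂) :=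
      Matrix.rank_eq_finrank_span_row _
    have hst : s ≤ t₁ + t₂ := by
      rw [hs, ht₁', ht₂']
      have := Submodule.finrank_sup_add_finrank_inf_eq
        (Submodule.span K S₁) (Submodule.span K S₂)
      have hsup : W = Submodule.span K S₁ ⊔ Submodule.span K S₂ := by
        rw [hW, Submodule.span_union]
      rw [hsup]
      omega
    -- basis of W
    let bw := Module.finBasis K W
    set b : Fin s → (Fin n → K) := fun i => (bw i : Fin n → K) with hb
    have hbli : LinearIndependent K b :=
      bw.linearIndependent.map' W.subtype (Submodule.ker_subtype _)
    have hbspan : Submodule.span K (Set.range b) = W := by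
      have h1 : Set.range b = W.subtype '' Set.range bw := by
        rw [← Set.range_comp]; rfl
      rw [h1, ← Submodule.map_span, Module.Basis.span_eq, Submodule.map_top, Submodule.range_subtype]
    have hindep : LinearIndependent L (fun i => ιmap (K := K) (L := L) (b i)) :=
      ιmap_linearIndependent γ hbli
    set V : Submodule L (Fin n → L) :=
      Submodule.span L (Set.range fun i => ιmap (K := K) (L := L) (b i)) with hV
    have hfinV : Module.finrank L V = s := by
      rw [hV, finrank_span_eq_card hindep, Fintype.card_fin]
    -- the row spaces
    set ℰ₁ : Submodule L (Fin n → L) := Submodule.span L (Set.range E₁) with hℰ₁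
    set ℰ₂ : Submodule L (Fin n → L) := Submodule.span L (Set.range E₂) with hℰ₂
    set 𝒟 : Submodule L (Fin n → L) := Submodule.span L (Set.range Δ) with h𝒟
    have hℰ₁eq : ℰ₁ = Submodule.span L (ιmap (K := K) (L := L) '' S₁) := rowspace_eq_span_extM γ E₁ hE₁full
    have hℰ₂eq : ℰ₂ = Submodule.span L (ιmap (K := K) (L := L) '' S₂) := rowspace_eq_span_extM γ E₂ hE₂full
    have hrkE1 : Module.finrank L ℰ₁ = t₁ := by
      rw [hℰ₁, show Set.range E₁ = Set.range E₁.row from rfl, ← Matrix.rank_eq_finrank_span_row E₁, hE₁full]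
    -- span L (ι '' (S₁ ∪ S₂)) = V
    have himW : ∀ x ∈ W, ιmap (K := K) (L := L) x ∈ V := by
      intro x hx
      rw [← hbspan] at hx
      have := ιmap_mem_span (L := L) hx
      rwa [show ιmap (K := K) (L := L) '' Set.range b = Set.range fun i => ιmap (K := K) (L := L) (b i) by
        rw [← Set.range_comp]; rfl] at this
    have hVeq : Submodule.span L (ιmap (K := K) (L := L) '' (S₁ ∪ S₂)) = V := by
      apply le_antisymm
      · rw [Submodule.span_le]
        rintro x ⟨y, hy, rfl⟩
        exact himW y (Submodule.subset_span hy)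
      · rw [hV, Submodule.span_le]
        rintro x ⟨i, rfl⟩
        have hbi : b i ∈ W := by rw [← hbspan]; exact Submodule.subset_span ⟨i, rfl⟩
        rw [hW] at hbi
        exact ιmap_mem_span (L := L) hbi
    have hℰ₁V : ℰ₁ ≤ V := by
      rw [hℰ₁eq, ← hVeq]
      exact Submodule.span_mono (Set.image_mono Set.subset_union_left)
    have hℰ₂V : ℰ₂ ≤ V := by
      rw [hℰ₂eq, ← hVeq]
      exact Submodule.span_mono (Set.image_mono Set.subset_union_right)
    have h𝒟C : 𝒟 ≤ C := by
      rw [h𝒟, Submodule.span_le]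
      rintro x ⟨i, rfl⟩
      rw [hΔrow i]
      exact Submodule.sub_mem _ (hC₁ i) (hC₂ i)
    have h𝒟V : 𝒟 ≤ V := by
      rw [h𝒟, Submodule.span_le]
      rintro x ⟨i, rfl⟩
      rw [hΔrowE i]
      exact Submodule.sub_mem _ (hℰ₂V (Submodule.subset_span ⟨i, rfl⟩))
        (hℰ₁V (Submodule.subset_span ⟨i, rfl⟩))
    have hℰ₂sup : ℰ₂ ≤ ℰ₁ ⊔ 𝒟 := by
      rw [hℰ₂, Submodule.span_le]
      rintro x ⟨i, rfl⟩
      have : E₂ i = E₁ i + Δ i := by rw [hΔrowE i]; abel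
      rw [this]
      exact Submodule.add_mem _
        (Submodule.mem_sup_left (Submodule.subset_span ⟨i, rfl⟩))
        (Submodule.mem_sup_right (Submodule.subset_span ⟨i, rfl⟩))
    have hVsup : V ≤ ℰ₁ ⊔ 𝒟 := by
      rw [← hVeq, Set.image_union, Submodule.span_union, ← hℰ₁eq, ← hℰ₂eq]
      exact sup_le le_sup_left hℰ₂sup
    set r : ℕ := Module.finrank L 𝒟 with hr
    have hr1 : 1 ≤ r := by
      by_contra h
      have hr0 : r = 0 := by omega
      have : 𝒟 = ⊥ := by
        rw [← Submodule.finrank_eq_zero (R := L) (M := Fin n → L)]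
        exact hr0 ▸ rfl
      obtain ⟨i, hi⟩ : ∃ i, Δ i ≠ 0 := by
        by_contra h'
        push_neg at h'
        exact hΔne (by funext i; exact h' i)
      have : Δ i ∈ (⊥ : Submodule L (Fin n → L)) := this ▸ Submodule.subset_span ⟨i, rfl⟩
      exact hi (Submodule.mem_bot _ |>.mp this)
    have hrs : r ≤ s := by
      rw [hr, ← hfinV]
      exact Submodule.finrank_mono h𝒟V
    have hs_le : s ≤ t₁ + r := by
      have h1 : Module.finrank L V ≤ Module.finrank L ↥(ℰ₁ ⊔ 𝒟) :=
        Submodule.finrank_mono hVsup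
      have h2 := Submodule.finrank_sup_add_finrank_inf_eq ℰ₁ 𝒟
      rw [hfinV] at h1
      omega
    -- echelon step
    have hcast : r - 1 ≤ s := by omega
    let βV : Module.Basis (Fin s) L V := Module.Basis.span hindep
    let incl : ↥𝒟 →ₗ[L] ↥V := Submodule.inclusion h𝒟V
    let ψ : ↥𝒟 →ₗ[L] (Fin (r - 1) → L) :=
      LinearMap.pi fun i => (βV.coord (Fin.castLE hcast i)).comp incl
    have hker : LinearMap.ker ψ ≠ ⊥ := by
      intro hk
      have hinj : Function.Injective ψ := LinearMap.ker_eq_bot.mp hk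
      have h1 : Module.finrank L ↥𝒟 ≤ Module.finrank L (Fin (r - 1) → L) :=
        LinearMap.finrank_le_finrank_of_injective hinj
      rw [Module.finrank_fintype_fun_eq_card, Fintype.card_fin] at h1
      omega
    obtain ⟨x, hxker, hx0⟩ := (Submodule.ne_bot_iff _).mp hker
    set c : Fin s → L := fun i => βV.repr (incl x) i with hc
    have hczero : ∀ i : Fin s, (i : ℕ) < r - 1 → c i = 0 := by
      intro i hi
      have hψ : ψ x = 0 := LinearMap.mem_ker.mp hxker
      have := congrFun hψ ⟨(i : ℕ), hi⟩
      simpa [ψ, hc, LinearMap.pi_apply, Module.Basis.coord_apply,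
        show Fin.castLE hcast ⟨(i : ℕ), hi⟩ = i from Fin.ext rfl] using this
    have hveq : (x : Fin n → L) = ∑ i, c i • ιmap (K := K) (L := L) (b i) := by
      have h2 : (incl x : ↥V) = ∑ i, c i • βV i := (βV.sum_repr (incl x)).symm
      have h3 : (x : Fin n → L) = ((incl x : ↥V) : Fin n → L) := rfl
      rw [h3, h2]
      push_cast
      refine Finset.sum_congr rfl fun i _ => ?_
      rw [Module.Basis.span_apply]
    set T : Set L :=
      Set.range (fun i : Fin (s - (r - 1)) =>
        c ⟨r - 1 + (i : ℕ), by have := i.isLt; omega⟩) with hT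
    have hentry : ∀ j, (x : Fin n → L) j ∈ Submodule.span K T := by
      intro j
      have h4 : (x : Fin n → L) j = ∑ i, (b i j) • c i := by
        rw [hveq]
        simp only [Finset.sum_apply, Pi.smul_apply, smul_eq_mul]
        refine Finset.sum_congr rfl fun i _ => ?_
        rw [Algebra.smul_def, mul_comm]; rfl
      rw [h4]
      refine Submodule.sum_mem _ fun i _ => ?_
      by_cases hi : (i : ℕ) < r - 1
      · rw [hczero i hi, smul_zero]; exact Submodule.zero_mem _
      · refine Submodule.smul_mem _ _ (Submodule.subset_span ?_)
        refine ⟨⟨(i : ℕ) - (r - 1), by have := i.isLt; omega⟩, ?_⟩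
        beta_reduce
        congr 1
        apply Fin.ext
        simp only [Fin.val_mk]
        omega
    have hvC : (x : Fin n → L) ∈ C := h𝒟C x.2
    have hvne : (x : Fin n → L) ≠ 0 := by
      intro h
      exact hx0 (Subtype.ext h)
    have hdle : d ≤ (extV γ (x : Fin n → L)).rank := hd _ hvC hvne
    have hrank_le : (extV γ (x : Fin n → L)).rank ≤ s - (r - 1) := by
      rw [rank_extV_eq]
      have hsub : Submodule.span K (Set.range (x : Fin n → L)) ≤ Submodule.span K T := by
        rw [Submodule.span_le]
        rintro y ⟨j, rfl⟩
        exact hentry j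
      refine (Submodule.finrank_mono hsub).trans ?_
      rw [hT]
      exact finrank_span_range_le' _
    omega
  refine ⟨main, ?_⟩
  rw [main] at hR
  exact add_left_cancel hR
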